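/- Under the standing assumptions, if f ∈ N^{1,p}(clΩ; μ₀), then f∘Φ ∈ N^{1,p}(clΩ_M), and ‖f∘Φ‖_{N^{1,p}(clΩ_M)} = ‖f‖_{N^{1,p}(Ω)} = ‖f‖_{N^{1,p}(clΩ;μ₀)}. -/

import Mathlib

open Set MeasureTheory Filter ENNReal NNReal Metric Topology

noncomputable section

/-- Extended absolute value of the "difference" of two extended reals; with Mathlib's
`EReal` subtraction conventions, `erealAbs (a - b) = ∞` whenever both `a` and `b`
are infinite, matching the convention for the upper gradient inequality. -/
def erealAbs (a : EReal) : ℝ≥0∞ :=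
  if a = ⊤ ∨ a = ⊥ then ⊤ else ENNReal.ofReal |a.toReal|

/-- Variation of `γ` over `[a,b]` computed with respect to an arbitrary
distance-like function `ρ`, as a supremum over partitions
`a = t 0 ≤ t 1 ≤ ⋯ ≤ t n = b`. -/
def variationWith {Y : Type*} (ρ : Y → Y → ℝ≥0∞) (γ : ℝ → Y) (a b : ℝ) : ℝ≥0∞ :=
  ⨆ P ∈ {P : ℕ × (ℕ → ℝ) |
      Monotone P.2 ∧ (∀ i, P.2 i ∈ Set.Icc a b) ∧ P.2 0 = a ∧ P.2 P.1 = b},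
    ∑ i ∈ Finset.range P.1, ρ (γ (P.2 i)) (γ (P.2 (i + 1)))

/-- `γ : [0,L] → Y` is parameterized by arc length with respect to `ρ`. -/
def IsArcLengthParamWith {Y : Type*} (ρ : Y → Y → ℝ≥0∞) (γ : ℝ → Y) (L : ℝ) : Prop :=
  ∀ s t : ℝ, s ∈ Set.Icc 0 L → t ∈ Set.Icc 0 L → s ≤ t →
    variationWith ρ γ s t = ENNReal.ofReal (t - s)

/-- `g` is an upper gradient of `f` on `S` with respect to the distance `ρ`:
for every (nonconstant, compact, rectifiable) curve in `S` parameterized by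
arc length, the upper gradient inequality holds. -/
def IsUpperGradientWith {Y : Type*} (ρ : Y → Y → ℝ≥0∞) (S : Set Y)
    (g : Y → ℝ≥0∞) (f : Y → EReal) : Prop :=
  ∀ (γ : ℝ → Y) (L : ℝ), 0 < L → Set.MapsTo γ (Set.Icc 0 L) S →
    IsArcLengthParamWith ρ γ L →
    erealAbs (f (γ L) - f (γ 0)) ≤ ∫⁻ t in Set.Icc 0 L, g (γ t)

/-- Upper gradient on `S` with respect to the ambient metric. -/
def IsUpperGradientOn {Y : Type*} [PseudoEMetricSpace Y] (S : Set Y)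
    (g : Y → ℝ≥0∞) (f : Y → EReal) : Prop :=
  IsUpperGradientWith (fun x y => edist x y) S g f

/-- The `p`-th power of the Newtonian norm of `f` on `S` with respect to the
measure `m` and the distance `ρ`:
`∫_S |f|^p dm + inf {∫_S g^p dm : g a Borel upper gradient of f on S w.r.t. ρ}`. -/
def npEnergyWith {Y : Type*} [MeasurableSpace Y] (m : Measure Y) (p : ℝ)
    (ρ : Y → Y → ℝ≥0∞) (S : Set Y) (f : Y → ℝ) : ℝ≥0∞ :=
  (∫⁻ y in S, ENNReal.ofReal |f y| ^ p ∂m) +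
    ⨅ g ∈ {g : Y → ℝ≥0∞ | Measurable g ∧
        IsUpperGradientWith ρ S g (fun y => (f y : EReal))},
      ∫⁻ y in S, g y ^ p ∂m

/-- The `p`-th power of the Newtonian norm of `f` on `S ⊆ Y` (w.r.t. the ambient metric). -/
def npEnergyOn {Y : Type*} [PseudoEMetricSpace Y] [MeasurableSpace Y]
    (m : Measure Y) (p : ℝ) (S : Set Y) (f : Y → ℝ) : ℝ≥0∞ :=
  npEnergyWith m p (fun x y => edist x y) S f

/-- `f ∈ N^{1,p}(S, m)`. -/
def MemNp {Y : Type*} [PseudoEMetricSpace Y] [MeasurableSpace Y]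
    (m : Measure Y) (p : ℝ) (S : Set Y) (f : Y → ℝ) : Prop :=
  Measurable f ∧ npEnergyOn m p S f ≠ ⊤

/-- The Sobolev capacity `C_p(E; S)` of `E ⊆ S`. -/
def CpOn {Y : Type*} [PseudoEMetricSpace Y] [MeasurableSpace Y]
    (m : Measure Y) (p : ℝ) (S E : Set Y) : ℝ≥0∞ :=
  ⨅ u ∈ {u : Y → ℝ | MemNp m p S u ∧ ∀ x ∈ E, u x = 1}, npEnergyOn m p S u

/-- The capacity `bC_p(E; S)` of `E ⊆ closure S`. -/
def bCpOn {Y : Type*} [PseudoEMetricSpace Y] [MeasurableSpace Y]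
    (m : Measure Y) (p : ℝ) (S E : Set Y) : ℝ≥0∞ :=
  ⨅ u ∈ {u : Y → ℝ | MemNp m p S u ∧ (∀ x ∈ E ∩ S, 1 ≤ u x) ∧
      ∀ x ∈ E ∩ (closure S \ S),
        (1 : EReal) ≤ Filter.liminf (fun y => (u y : EReal)) (nhdsWithin x S)},
    npEnergyOn m p S u

/-- The Mazurkiewicz distance on `S`. -/
def mazDist {Y : Type*} [PseudoEMetricSpace Y] (S : Set Y) (x y : Y) : ℝ≥0∞ :=
  ⨅ E ∈ {E : Set Y | E ⊆ S ∧ IsConnected E ∧ x ∈ E ∧ y ∈ E}, EMetric.diam E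

/-- The inner metric on `S`: the infimum of lengths of curves in `S` joining
`x` and `y` (`∞` if there are none). -/
def innerDist {Y : Type*} [PseudoEMetricSpace Y] (S : Set Y) (x y : Y) : ℝ≥0∞ :=
  ⨅ c ∈ {c : (ℝ → Y) × ℝ × ℝ | c.2.1 ≤ c.2.2 ∧
      ContinuousOn c.1 (Set.Icc c.2.1 c.2.2) ∧
      Set.MapsTo c.1 (Set.Icc c.2.1 c.2.2) S ∧ c.1 c.2.1 = x ∧ c.1 c.2.2 = y},
    eVariationOn c.1 (Set.Icc c.2.1 c.2.2)

/-- `S` is `L`-quasiconvex: any two points of `S` can be joined by a curve in `S`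
of length at most `L` times their distance. -/
def LQuasiconvexOn {Y : Type*} [PseudoMetricSpace Y] (S : Set Y) (L : ℝ) : Prop :=
  ∀ x ∈ S, ∀ y ∈ S, ∃ (γ : ℝ → Y) (a b : ℝ), a ≤ b ∧
    ContinuousOn γ (Set.Icc a b) ∧ Set.MapsTo γ (Set.Icc a b) S ∧
    γ a = x ∧ γ b = y ∧ eVariationOn γ (Set.Icc a b) ≤ ENNReal.ofReal (L * dist x y)

/-- A quasiconvex metric space. -/
def QuasiconvexSpace (Y : Type*) [PseudoMetricSpace Y] : Prop :=
  ∃ L : ℝ, 1 ≤ L ∧ LQuasiconvexOn (Set.univ : Set Y) L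

/-- A bounded domain: a bounded nonempty open connected set. -/
def IsBoundedDomain {Y : Type*} [PseudoMetricSpace Y] (Ω : Set Y) : Prop :=
  IsOpen Ω ∧ IsConnected Ω ∧ Bornology.IsBounded Ω

/-- `Ω` is finitely connected at the boundary. -/
def FinConnAtBoundary {Y : Type*} [MetricSpace Y] (Ω : Set Y) : Prop :=
  ∀ x₀ ∈ frontier Ω, ∀ r : ℝ, 0 < r → ∃ G : Set Y, IsOpen G ∧ x₀ ∈ G ∧
    G ⊆ Metric.ball x₀ r ∧
    {C : Set Y | ∃ x ∈ G ∩ Ω, C = connectedComponentIn (G ∩ Ω) x}.Finite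

/-- The standing assumption on the measure: every ball has positive finite measure. -/
def BallRegular {Y : Type*} [PseudoMetricSpace Y] [MeasurableSpace Y]
    (m : Measure Y) : Prop :=
  ∀ (x : Y) (r : ℝ), 0 < r → 0 < m (Metric.ball x r) ∧ m (Metric.ball x r) < ⊤

/-- The measure `m` is (globally) doubling. -/
def DoublingMeasure' {Y : Type*} [PseudoMetricSpace Y] [MeasurableSpace Y]
    (m : Measure Y) : Prop :=
  ∃ C : ℝ≥0, 0 < C ∧ ∀ (x : Y) (r : ℝ), 0 < r →
    m (Metric.ball x (2 * r)) ≤ C * m (Metric.ball x r)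

/-- `(Y, m)` supports a `p`-Poincaré inequality. -/
def PoincareInequality {Y : Type*} [MetricSpace Y] [MeasurableSpace Y]
    (m : Measure Y) (p : ℝ) : Prop :=
  ∃ C lam : ℝ, 0 < C ∧ 1 ≤ lam ∧
    ∀ (x : Y) (r : ℝ), 0 < r → ∀ f : Y → ℝ, Integrable f m →
      ∀ g : Y → ℝ≥0∞, Measurable g →
        IsUpperGradientOn (Set.univ : Set Y) g (fun y => (f y : EReal)) →
        ENNReal.ofReal (⨍ y in Metric.ball x r,
            |f y - ⨍ z in Metric.ball x r, f z ∂m| ∂m) ≤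
          ENNReal.ofReal (C * Metric.diam (Metric.ball x r)) *
            ((∫⁻ y in Metric.ball x (lam * r), g y ^ p ∂m) /
              m (Metric.ball x (lam * r))) ^ (1 / p)

section Var
variable {Y : Type*} (ρ : Y → Y → ℝ≥0∞) (γ γ' : ℝ → Y) {a b c : ℝ}

lemma erealAbs_coe_sub (x y : ℝ) :
    erealAbs ((x : EReal) - (y : EReal)) = ENNReal.ofReal |x - y| := by
  have h : ((x : EReal) - (y : EReal)) = ((x - y : ℝ) : EReal) := (EReal.coe_sub x y).symm
  rw [h, erealAbs, if_neg (by rw [← h]; push_neg; exact ⟨by rw [h]; exact EReal.coe_ne_top _, by rw [h]; exact EReal.coe_ne_bot _⟩)]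
  rw [EReal.toReal_coe]

lemma sum_le_variationWith (aa bb : ℝ) (P : ℕ × (ℕ → ℝ)) (h1 : Monotone P.2)
    (h2 : ∀ i, P.2 i ∈ Set.Icc aa bb) (h3 : P.2 0 = aa) (h4 : P.2 P.1 = bb) :
    ∑ i ∈ Finset.range P.1, ρ (γ (P.2 i)) (γ (P.2 (i + 1))) ≤ variationWith ρ γ aa bb :=
  le_iSup₂_of_le P ⟨h1, h2, h3, h4⟩ le_rfl

lemma pair_le_variationWith (hab : a ≤ b) :
    ρ (γ a) (γ b) ≤ variationWith ρ γ a b := by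
  have := sum_le_variationWith ρ γ a b ((1 : ℕ), fun i : ℕ => if i = 0 then a else b)
    (by
      intro i j hij
      by_cases hj : j = 0
      · have hi : i = 0 := by omega
        simp [hi, hj]
      · by_cases hi : i = 0 <;> simp [hi, hj, hab])
    (by intro i; by_cases hi : i = 0 <;> simp [hi, hab])
    (by simp) (by simp)
  simpa using this

lemma variationWith_le_of_forall_sum_le {M : ℝ≥0∞}
    (h : ∀ P : ℕ × (ℕ → ℝ), Monotone P.2 → (∀ i, P.2 i ∈ Set.Icc a b) →
      P.2 0 = a → P.2 P.1 = b →
      ∑ i ∈ Finset.range P.1, ρ (γ (P.2 i)) (γ (P.2 (i + 1))) ≤ M) :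
    variationWith ρ γ a b ≤ M := by
  refine iSup₂_le fun P hP => h P hP.1 hP.2.1 hP.2.2.1 hP.2.2.2

lemma variationWith_congr (h : ∀ t ∈ Set.Icc a b, γ t = γ' t) :
    variationWith ρ γ a b = variationWith ρ γ' a b := by
  have key : ∀ (δ δ' : ℝ → Y), (∀ t ∈ Set.Icc a b, δ t = δ' t) →
      variationWith ρ δ a b ≤ variationWith ρ δ' a b := by
    intro δ δ' hδ
    refine variationWith_le_of_forall_sum_le _ _ fun P h1 h2 h3 h4 => ?_
    calc ∑ i ∈ Finset.range P.1, ρ (δ (P.2 i)) (δ (P.2 (i + 1)))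
        = ∑ i ∈ Finset.range P.1, ρ (δ' (P.2 i)) (δ' (P.2 (i + 1))) := by
          refine Finset.sum_congr rfl fun i _ => by rw [hδ _ (h2 i), hδ _ (h2 (i+1))]
      _ ≤ _ := sum_le_variationWith ρ δ' a b P h1 h2 h3 h4
  exact le_antisymm (key γ γ' h) (key γ' γ fun t ht => (h t ht).symm)

lemma variationWith_comp_add (c : ℝ) :
    variationWith ρ (fun t => γ (c + t)) a b = variationWith ρ γ (c + a) (c + b) := by
  apply le_antisymm
  · refine variationWith_le_of_forall_sum_le _ _ fun P h1 h2 h3 h4 => ?_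
    exact sum_le_variationWith ρ γ (c+a) (c+b) (P.1, fun i => c + P.2 i)
      (fun i j hij => by simpa using h1 hij)
      (fun i => ⟨by have := (h2 i).1; simpa using this, by have := (h2 i).2; simpa using this⟩)
      (by simp [h3]) (by simp [h4])
  · refine variationWith_le_of_forall_sum_le _ _ fun P h1 h2 h3 h4 => ?_
    have key := sum_le_variationWith ρ (fun t => γ (c + t)) a b (P.1, fun i => P.2 i - c)
      (fun i j hij => by simpa using h1 hij)
      (fun i => ⟨by have := (h2 i).1; simp only; linarith, by have := (h2 i).2; simp only; linarith⟩)
      (by simp [h3]) (by simp [h4])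
    calc ∑ i ∈ Finset.range P.1, ρ (γ (P.2 i)) (γ (P.2 (i + 1)))
        = ∑ i ∈ Finset.range P.1, ρ (γ (c + (P.2 i - c))) (γ (c + (P.2 (i+1) - c))) := by
          refine Finset.sum_congr rfl fun i _ => by ring_nf
      _ ≤ _ := key

end Var

section Var2
variable {Y : Type*} (ρ : Y → Y → ℝ≥0∞) (γ : ℝ → Y) {a b c : ℝ}

lemma variationWith_superadd (hab : a ≤ b) (hbc : b ≤ c) :
    variationWith ρ γ a b + variationWith ρ γ b c ≤ variationWith ρ γ a c := by
  -- rewrite the two biSups over nonempty index types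
  have hne1 : ∃ P : ℕ × (ℕ → ℝ), Monotone P.2 ∧ (∀ i, P.2 i ∈ Set.Icc a b) ∧
      P.2 0 = a ∧ P.2 P.1 = b := by
    refine ⟨((1 : ℕ), fun i : ℕ => if i = 0 then a else b), ?_, ?_, by simp, by simp⟩
    · intro i j hij
      by_cases hj : j = 0
      · have hi : i = 0 := by omega
        simp [hi, hj]
      · by_cases hi : i = 0 <;> simp [hi, hj, hab]
    · intro i; by_cases hi : i = 0 <;> simp [hi, hab]
  refine ENNReal.biSup_add_biSup_le' (by exact hne1) (by
    refine ⟨((1 : ℕ), fun i : ℕ => if i = 0 then b else c), ?_, ?_, by simp, by simp⟩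
    · intro i j hij
      by_cases hj : j = 0
      · have hi : i = 0 := by omega
        simp [hi, hj]
      · by_cases hi : i = 0 <;> simp [hi, hj, hbc]
    · intro i; by_cases hi : i = 0 <;> simp [hi, hbc]) ?_
  rintro P ⟨hP1, hP2, hP3, hP4⟩ Q ⟨hQ1, hQ2, hQ3, hQ4⟩
  set w : ℕ → ℝ := fun i => if i ≤ P.1 then P.2 i else Q.2 (i - P.1) with hw
  have hwval : ∀ j : ℕ, w (P.1 + j) = Q.2 j := by
    intro j
    rcases Nat.eq_zero_or_pos j with hj | hj
    · simp [hw, hj, hP4, hQ3]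
    · have : ¬ (P.1 + j ≤ P.1) := by omega
      simp [hw, this]
  have hmono : Monotone w := by
    intro i j hij
    by_cases hi : i ≤ P.1 <;> by_cases hj : j ≤ P.1
    · simpa [hw, hi, hj] using hP1 hij
    · have h1 : P.2 i ≤ b := (hP2 i).2
      have h2 : b ≤ Q.2 (j - P.1) := hQ3 ▸ hQ1 (Nat.zero_le _)
      simpa [hw, hi, hj] using le_trans h1 h2
    · omega
    · have : i - P.1 ≤ j - P.1 := by omega
      simpa [hw, hi, hj] using hQ1 this
  have hsum : ∑ i ∈ Finset.range (P.1 + Q.1), ρ (γ (w i)) (γ (w (i + 1)))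
      = (∑ i ∈ Finset.range P.1, ρ (γ (P.2 i)) (γ (P.2 (i + 1))))
        + ∑ i ∈ Finset.range Q.1, ρ (γ (Q.2 i)) (γ (Q.2 (i + 1))) := by
    rw [Finset.sum_range_add]
    congr 1
    · refine Finset.sum_congr rfl fun i hi => ?_
      have hi' : i < P.1 := Finset.mem_range.mp hi
      have e1 : w i = P.2 i := by simp [hw, le_of_lt hi']
      have e2 : w (i + 1) = P.2 (i + 1) := by simp [hw, Nat.succ_le_of_lt hi']
      rw [e1, e2]
    · refine Finset.sum_congr rfl fun i hi => ?_
      rw [hwval i, show P.1 + i + 1 = P.1 + (i + 1) by omega, hwval (i + 1)]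
  calc _ = ∑ i ∈ Finset.range (P.1 + Q.1), ρ (γ (w i)) (γ (w (i + 1))) := hsum.symm
    _ ≤ _ := by
        refine sum_le_variationWith ρ γ a c (P.1 + Q.1, w) hmono ?_ ?_ ?_
        · intro i
          by_cases hi : i ≤ P.1
          · have := hP2 i
            exact ⟨by simpa [hw, hi] using (this.1),
              by simpa [hw, hi] using le_trans this.2 hbc⟩
          · have := hQ2 (i - P.1)
            exact ⟨by simpa [hw, hi] using le_trans hab this.1,
              by simpa [hw, hi] using this.2⟩
        · simpa [hw] using hP3
        · show w (P.1 + Q.1) = c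
          rw [hwval Q.1]; exact hQ4

lemma variationWith_sum_chain (u : ℕ → ℝ) (hu : Monotone u) (n : ℕ) :
    ∑ i ∈ Finset.range n, variationWith ρ γ (u i) (u (i + 1))
      ≤ variationWith ρ γ (u 0) (u n) := by
  induction n with
  | zero => simp
  | succ n ih =>
      rw [Finset.sum_range_succ]
      refine le_trans (add_le_add_left ih _) ?_
      exact variationWith_superadd ρ γ (hu (Nat.zero_le n)) (hu (Nat.le_succ n))

lemma variationWith_mono_interval (ha : a ≤ b) (h1 : c ≤ a) {d : ℝ} (h2 : b ≤ d) :
    variationWith ρ γ a b ≤ variationWith ρ γ c d := by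
  calc variationWith ρ γ a b ≤ variationWith ρ γ c a + variationWith ρ γ a b := le_add_self
    _ ≤ variationWith ρ γ c b := variationWith_superadd ρ γ h1 ha
    _ ≤ variationWith ρ γ c b + variationWith ρ γ b d := le_self_add
    _ ≤ variationWith ρ γ c d := variationWith_superadd ρ γ (h1.trans ha) h2

lemma variationWith_map_le {Y' : Type*} (ρ' : Y' → Y' → ℝ≥0∞) (F : Y → Y')
    (h : ∀ u v, u ∈ Set.Icc a b → v ∈ Set.Icc a b → ρ' (F (γ u)) (F (γ v)) ≤ ρ (γ u) (γ v)) :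
    variationWith ρ' (fun t => F (γ t)) a b ≤ variationWith ρ γ a b := by
  refine variationWith_le_of_forall_sum_le _ _ fun P h1 h2 h3 h4 => ?_
  calc ∑ i ∈ Finset.range P.1, ρ' (F (γ (P.2 i))) (F (γ (P.2 (i + 1))))
      ≤ ∑ i ∈ Finset.range P.1, ρ (γ (P.2 i)) (γ (P.2 (i + 1))) :=
        Finset.sum_le_sum fun i _ => h _ _ (h2 i) (h2 (i+1))
    _ ≤ _ := sum_le_variationWith ρ γ a b P h1 h2 h3 h4

end Var2

section Arc
variable {Y : Type*} [PseudoEMetricSpace Y] {γ : ℝ → Y} {L a b t : ℝ}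

lemma IsArcLengthParamWith.edist_le
    (h : IsArcLengthParamWith (fun x y => edist x y) γ L)
    (hs : a ∈ Set.Icc 0 L) (ht : b ∈ Set.Icc 0 L) (hab : a ≤ b) :
    edist (γ a) (γ b) ≤ ENNReal.ofReal (b - a) := by
  rw [← h a b hs ht hab]
  exact pair_le_variationWith _ γ hab

lemma IsArcLengthParamWith.continuousOn
    (h : IsArcLengthParamWith (fun x y => edist x y) γ L) :
    ContinuousOn γ (Set.Icc 0 L) := by
  have : LipschitzOnWith 1 γ (Set.Icc 0 L) := by
    intro s hs t ht
    rcases le_total s t with hst | hst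
    · refine le_trans (h.edist_le hs ht hst) ?_
      rw [ENNReal.coe_one, one_mul, edist_dist, Real.dist_eq]
      exact ENNReal.ofReal_le_ofReal (by rw [abs_sub_comm]; exact le_abs_self _)
    · refine le_trans (edist_comm (γ s) (γ t) ▸ h.edist_le ht hs hst) ?_
      rw [ENNReal.coe_one, one_mul, edist_dist, Real.dist_eq]
      exact ENNReal.ofReal_le_ofReal (le_abs_self _)
  exact this.continuousOn

/-- clamp of `t` to `[a,b]` -/
def clampI (a b t : ℝ) : ℝ := min (max t a) b

lemma clampI_mem (hab : a ≤ b) (t : ℝ) : clampI a b t ∈ Set.Icc a b :=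
  ⟨le_min (le_max_right t a) hab, min_le_right _ _⟩

lemma clampI_of_mem (ht : t ∈ Set.Icc a b) : clampI a b t = t := by
  rcases ht with ⟨h1, h2⟩
  rw [clampI, max_eq_left h1, min_eq_left h2]

lemma continuous_clampI (a b : ℝ) : Continuous (clampI a b) :=
  (continuous_id.max continuous_const).min continuous_const

end Arc

section Sub
variable {Y : Type*} [PseudoEMetricSpace Y] [MeasurableSpace Y] [BorelSpace Y]
  {γ : ℝ → Y} {L a b : ℝ} {S : Set Y} {g : Y → ℝ≥0∞} {F : Y → EReal}

lemma lintegral_Icc_comp_add (h : ℝ → ℝ≥0∞) (hm : Measurable h) (a b : ℝ) :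
    ∫⁻ u in Set.Icc 0 (b - a), h (a + u) = ∫⁻ t in Set.Icc a b, h t := by
  conv_rhs => rw [← map_add_left_eq_self volume a]
  rw [setLIntegral_map measurableSet_Icc hm (measurable_const_add a)]
  have : (fun x => a + x) ⁻¹' Icc a b = Icc 0 (b - a) := by
    rw [preimage_const_add_Icc, sub_self]
  rw [this]

/-- The subcurve upper-gradient inequality. -/
lemma IsUpperGradientWith.subcurve
    (hg : IsUpperGradientWith (fun x y => edist x y) S g F)
    (hal : IsArcLengthParamWith (fun x y => edist x y) γ L)
    (hab : a < b) (h0 : 0 ≤ a) (hbL : b ≤ L)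
    (hmap : Set.MapsTo γ (Set.Icc a b) S) (hgm : Measurable g) :
    erealAbs (F (γ b) - F (γ a)) ≤ ∫⁻ t in Set.Icc a b, g (γ (clampI a b t)) := by
  have h0L : (0:ℝ) ≤ L := le_trans h0 (le_trans hab.le hbL)
  set γ' : ℝ → Y := fun u => γ (a + clampI 0 (b - a) u) with hγ'
  have hsub : Set.Icc a b ⊆ Set.Icc 0 L := Set.Icc_subset_Icc h0 hbL
  have hval : ∀ u ∈ Set.Icc 0 (b - a), γ' u = γ (a + u) := by
    intro u hu
    rw [hγ']
    simp only
    rw [clampI_of_mem hu]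
  have hmem : ∀ u : ℝ, a + clampI 0 (b - a) u ∈ Set.Icc a b := by
    intro u
    have := clampI_mem (by linarith : (0:ℝ) ≤ b - a) u
    exact ⟨by linarith [this.1], by linarith [this.2]⟩
  have halsub : IsArcLengthParamWith (fun x y => edist x y) γ' (b - a) := by
    intro s t hs ht hst
    have e1 : variationWith (fun x y => edist x y) γ' s t
        = variationWith (fun x y => edist x y) (fun u => γ (a + u)) s t := by
      refine variationWith_congr _ _ _ fun u hu => ?_
      exact hval u ⟨le_trans hs.1 hu.1, le_trans hu.2 ht.2⟩
    rw [e1, variationWith_comp_add]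
    rw [hal (a + s) (a + t) ⟨by linarith [hs.1], by linarith [hs.2]⟩
      ⟨by linarith [ht.1], by linarith [ht.2]⟩ (by linarith)]
    congr 1
    ring
  have happ := hg γ' (b - a) (by linarith) (fun u hu => by
    rw [hval u hu]; exact hmap ⟨by linarith [hu.1], by linarith [hu.2]⟩) halsub
  have e0 : γ' 0 = γ a := by rw [hval 0 ⟨le_refl 0, by linarith⟩]; norm_num
  have eb : γ' (b - a) = γ b := by
    rw [hval (b - a) ⟨by linarith, le_refl _⟩]; norm_num
  rw [e0, eb] at happ
  refine le_trans happ ?_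
  have hint : ∫⁻ u in Set.Icc 0 (b - a), g (γ' u)
      = ∫⁻ t in Set.Icc a b, g (γ (clampI a b t)) := by
    have hcont : Continuous fun t : ℝ => γ (clampI a b t) :=
      hal.continuousOn.comp_continuous (continuous_clampI a b)
        (fun t => hsub (clampI_mem hab.le t))
    have hmeas : Measurable fun t : ℝ => g (γ (clampI a b t)) :=
      hgm.comp hcont.measurable
    rw [← lintegral_Icc_comp_add _ hmeas a b]
    refine setLIntegral_congr_fun measurableSet_Icc ?_
    intro u hu
    dsimp only
    rw [hval u hu, clampI_of_mem ⟨by linarith [hu.1], by linarith [hu.2]⟩]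
  rw [hint]

end Sub

section Maz
variable {X : Type*} [MetricSpace X] {Z : Type*} [MetricSpace Z]
  {Ω : Set X} {ι : Ω → Z} {Φ : Z → X}

lemma edist_le_mazDist (x y : X) : edist x y ≤ mazDist Ω x y :=
  le_iInf₂ fun E hE => EMetric.edist_le_diam_of_mem hE.2.2.1 hE.2.2.2

lemma mazDist_le_diam {E : Set X} (hE : E ⊆ Ω) (hc : IsConnected E) {x y : X}
    (hx : x ∈ E) (hy : y ∈ E) : mazDist Ω x y ≤ EMetric.diam E :=
  iInf₂_le E ⟨hE, hc, hx, hy⟩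

lemma exists_connected_of_mazDist_lt {x y : X} {r : ℝ≥0∞} (h : mazDist Ω x y < r) :
    ∃ E : Set X, E ⊆ Ω ∧ IsConnected E ∧ x ∈ E ∧ y ∈ E ∧ EMetric.diam E < r := by
  rw [mazDist, iInf_lt_iff] at h
  obtain ⟨E, hE⟩ := h
  rw [iInf_lt_iff] at hE
  obtain ⟨hmem, hlt⟩ := hE
  exact ⟨E, hmem.1, hmem.2.1, hmem.2.2.1, hmem.2.2.2, hlt⟩

lemma edist_le_diam_image
    (hι : ∀ x y : Ω, edist (ι x) (ι y) = mazDist Ω (x : X) (y : X))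
    (hdense : DenseRange ι) (hΦ : LipschitzWith 1 Φ) (hΦι : ∀ x : Ω, Φ (ι x) = (x : X))
    {γ : ℝ → Z} {L a b : ℝ}
    (hlip : ∀ u v : ℝ, u ∈ Set.Icc 0 L → v ∈ Set.Icc 0 L → u ≤ v →
      edist (γ u) (γ v) ≤ ENNReal.ofReal (v - u))
    (h0 : 0 ≤ a) (hab : a ≤ b) (hbL : b ≤ L) :
    edist (γ a) (γ b) ≤ EMetric.diam ((fun t => Φ (γ t)) '' Set.Icc a b) := by
  have hΦ1 : ∀ z z' : Z, edist (Φ z) (Φ z') ≤ edist z z' := by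
    intro z z'
    simpa using hΦ z z'
  set D := EMetric.diam ((fun t => Φ (γ t)) '' Set.Icc a b) with hD
  refine ENNReal.le_of_forall_pos_le_add fun ε hε hDlt => ?_
  set ε' : ℝ := (ε : ℝ) / 12 with hε'def
  have hε' : 0 < ε' := by positivity
  -- mesh
  set N : ℕ := Nat.ceil ((b - a) / ε') + 1 with hNdef
  have hN : 0 < N := Nat.succ_pos _
  have hstep : (b - a) / N < ε' := by
    rw [div_lt_iff₀ (show (0:ℝ) < N by exact_mod_cast hN)]
    have h1 : (b - a) / ε' < N := by
      calc (b - a) / ε' ≤ Nat.ceil ((b - a) / ε') := Nat.le_ceil _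
        _ < N := by exact_mod_cast Nat.lt_succ_self _
    calc b - a = ((b - a) / ε') * ε' := by field_simp
      _ < N * ε' := by
          apply mul_lt_mul_of_pos_right h1 hε'
      _ = ε' * N := by ring
  set st : ℝ := (b - a) / N with hstdef
  have hst0 : 0 ≤ st := by
    apply div_nonneg (by linarith) (by exact_mod_cast hN.le)
  set w : ℕ → ℝ := fun j => a + (min j N) * st with hwdef
  have hwIcc : ∀ j, w j ∈ Set.Icc a b := by
    intro j
    constructor
    · have : (0:ℝ) ≤ (min j N) * st := by positivity
      simp only [hwdef]; linarith
    · have h1 : ((min j N : ℕ) : ℝ) ≤ (N : ℝ) := by exact_mod_cast min_le_right j N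
      have h2 : ((min j N : ℕ) : ℝ) * st ≤ N * st := mul_le_mul_of_nonneg_right h1 hst0
      have h3 : (N : ℝ) * st = b - a := by
        rw [hstdef]; field_simp
      simp only [hwdef]; linarith
  have hw0 : w 0 = a := by simp [hwdef]
  have hwN : w N = b := by
    have h3 : (N : ℝ) * st = b - a := by rw [hstdef]; field_simp
    simp only [hwdef, min_self]
    linarith
  have hwstep : ∀ j, edist (γ (w j)) (γ (w (j+1))) ≤ ENNReal.ofReal st := by
    intro j
    have hmono : w j ≤ w (j+1) := by
      have : ((min j N : ℕ) : ℝ) ≤ ((min (j+1) N : ℕ) : ℝ) := by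
        exact_mod_cast min_le_min (Nat.le_succ j) le_rfl
      simp only [hwdef]
      nlinarith [hst0]
    have hd : w (j+1) - w j ≤ st := by
      have h1 : ((min (j+1) N : ℕ) : ℝ) ≤ ((min j N : ℕ) : ℝ) + 1 := by
        have : min (j+1) N ≤ min j N + 1 := by omega
        exact_mod_cast this
      simp only [hwdef]
      nlinarith [hst0]
    refine le_trans (hlip _ _ (Set.Icc_subset_Icc h0 hbL (hwIcc j))
      (Set.Icc_subset_Icc h0 hbL (hwIcc (j+1))) hmono) ?_
    exact ENNReal.ofReal_le_ofReal hd
  -- approximating points in Ω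
  have hxex : ∀ j : ℕ, ∃ y : Ω, dist (γ (w j)) (ι y) < ε' := fun j =>
    hdense.exists_dist_lt (γ (w j)) hε'
  choose x hx using hxex
  have hedx : ∀ j, edist (ι (x j)) (γ (w j)) < ENNReal.ofReal ε' := by
    intro j
    rw [edist_comm, edist_dist]
    exact ENNReal.ofReal_lt_ofReal_iff_of_nonneg dist_nonneg |>.mpr (hx j)
  -- connected sets joining consecutive points
  have hEex : ∀ j : ℕ, ∃ E : Set X, E ⊆ Ω ∧ IsConnected E ∧ (x j : X) ∈ E ∧
      (x (j+1) : X) ∈ E ∧ EMetric.diam E < ENNReal.ofReal (3 * ε') := by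
    intro j
    have hmaz : mazDist Ω (x j : X) (x (j+1) : X) < ENNReal.ofReal (3 * ε') := by
      rw [← hι]
      calc edist (ι (x j)) (ι (x (j+1)))
          ≤ edist (ι (x j)) (γ (w j)) + edist (γ (w j)) (γ (w (j+1)))
            + edist (γ (w (j+1))) (ι (x (j+1))) := edist_triangle4 _ _ _ _
        _ ≤ ENNReal.ofReal ε' + ENNReal.ofReal st + ENNReal.ofReal ε' := by
            have h1 := (hedx j).le
            have h2 := hwstep j
            have h3 := (hedx (j+1)).le
            rw [edist_comm (ι (x (j+1)))] at h3
            exact add_le_add (add_le_add h1 h2) h3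
        _ = ENNReal.ofReal (ε' + st + ε') := by
            rw [← ENNReal.ofReal_add (by positivity) hst0,
              ← ENNReal.ofReal_add (by positivity) (le_of_lt hε')]
        _ < ENNReal.ofReal (3 * ε') := by
            rw [ENNReal.ofReal_lt_ofReal_iff (by positivity)]
            linarith [hstep]
    exact exists_connected_of_mazDist_lt hmaz
  choose E hEsub hEconn hEmem1 hEmem2 hEdiam using hEex
  set C : Set X := ⋃ j ∈ Finset.range N, E j with hC
  have hCx : ∀ j, j ≤ N → (x j : X) ∈ C := by
    intro j hj
    rcases Nat.lt_or_ge j N with h | h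
    · exact Set.mem_biUnion (Finset.mem_range.mpr h) (hEmem1 j)
    · have hjN : j = N := le_antisymm hj h
      have hN1 : N - 1 < N := by omega
      have : (x j : X) ∈ E (N - 1) := by
        rw [hjN, show N = (N-1) + 1 by omega]
        exact hEmem2 (N - 1)
      exact Set.mem_biUnion (Finset.mem_range.mpr hN1) this
  have hCsub : C ⊆ Ω := by
    intro e he
    rcases Set.mem_iUnion₂.mp he with ⟨j, hj, hje⟩
    exact hEsub j hje
  have hCconn : IsConnected C := by
    have key : ∀ k : ℕ, IsConnected (⋃ j ∈ Finset.range (k+1), E j) := by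
      intro k
      induction k with
      | zero => simpa using hEconn 0
      | succ k ih =>
          have hsplit : (⋃ j ∈ Finset.range (k+2), E j)
              = E (k+1) ∪ ⋃ j ∈ Finset.range (k+1), E j := by
            rw [show k+2 = (k+1)+1 from rfl, Finset.range_add_one, Finset.set_biUnion_insert]
          rw [hsplit]
          refine (hEconn (k+1)).union ?_ ih
          exact ⟨x (k+1), hEmem1 (k+1), Set.mem_biUnion (Finset.mem_range.mpr (Nat.lt_succ_self k)) (hEmem2 k)⟩
    have : C = ⋃ j ∈ Finset.range ((N-1)+1), E j := by
      rw [hC, show (N-1)+1 = N by omega]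
    rw [this]
    exact key (N-1)
  have hloc : ∀ j, ∀ e ∈ E j, edist e (Φ (γ (w j))) ≤ ENNReal.ofReal (4 * ε') := by
    intro j e he
    calc edist e (Φ (γ (w j)))
        ≤ edist e (x j : X) + edist (x j : X) (Φ (γ (w j))) := edist_triangle _ _ _
      _ ≤ ENNReal.ofReal (3 * ε') + ENNReal.ofReal ε' := by
          refine add_le_add ?_ ?_
          · exact le_trans (EMetric.edist_le_diam_of_mem he (hEmem1 j)) (hEdiam j).le
          · rw [← hΦι (x j)]
            exact le_trans (hΦ1 _ _) (hedx j).le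
      _ ≤ ENNReal.ofReal (4 * ε') := by
          rw [← ENNReal.ofReal_add (by positivity) (by positivity)]
          apply ENNReal.ofReal_le_ofReal
          linarith
  have hdiamC : EMetric.diam C ≤ D + ENNReal.ofReal (8 * ε') := by
    refine EMetric.diam_le fun e he e' he' => ?_
    rcases Set.mem_iUnion₂.mp he with ⟨j, hj, hje⟩
    rcases Set.mem_iUnion₂.mp he' with ⟨k, hk, hke⟩
    calc edist e e' ≤ edist e (Φ (γ (w j))) + edist (Φ (γ (w j))) (Φ (γ (w k)))
          + edist (Φ (γ (w k))) e' := edist_triangle4 _ _ _ _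
      _ ≤ ENNReal.ofReal (4 * ε') + D + ENNReal.ofReal (4 * ε') := by
          refine add_le_add (add_le_add (hloc j e hje) ?_) ?_
          · exact EMetric.edist_le_diam_of_mem ⟨w j, hwIcc j, rfl⟩ ⟨w k, hwIcc k, rfl⟩
          · rw [edist_comm]
            exact hloc k e' hke
      _ = D + ENNReal.ofReal (8 * ε') := by
          rw [show ENNReal.ofReal (4*ε') + D + ENNReal.ofReal (4*ε')
              = D + (ENNReal.ofReal (4*ε') + ENNReal.ofReal (4*ε')) from by ring,
            ← ENNReal.ofReal_add (by positivity) (by positivity)]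
          congr 1
          ring
  calc edist (γ a) (γ b) = edist (γ (w 0)) (γ (w N)) := by rw [hw0, hwN]
    _ ≤ edist (γ (w 0)) (ι (x 0)) + edist (ι (x 0)) (ι (x N))
        + edist (ι (x N)) (γ (w N)) := edist_triangle4 _ _ _ _
    _ ≤ ENNReal.ofReal ε' + (D + ENNReal.ofReal (8 * ε')) + ENNReal.ofReal ε' := by
        refine add_le_add (add_le_add ?_ ?_) ?_
        · rw [edist_comm]
          exact (hedx 0).le
        · rw [hι]
          exact le_trans (mazDist_le_diam hCsub hCconn (hCx 0 (Nat.zero_le N)) (hCx N le_rfl)) hdiamC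
        · exact (hedx N).le
    _ = D + (ENNReal.ofReal ε' + ENNReal.ofReal (8 * ε') + ENNReal.ofReal ε') := by ring
    _ ≤ D + ↑ε := by
        refine add_le_add_right ?_ D
        rw [← ENNReal.ofReal_add (by positivity) (by positivity),
          ← ENNReal.ofReal_add (by positivity) (by positivity)]
        rw [← ENNReal.ofReal_coe_nnreal]
        apply ENNReal.ofReal_le_ofReal
        rw [hε'def]
        linarith
end Maz

section Layer
variable {W : Type*} [MeasurableSpace W] (m : Measure W) [SFinite m]

lemma lintegral_eq_layercake (h : W → ℝ≥0∞) (hm : Measurable h) :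
    ∫⁻ w, h w ∂m = ∫⁻ t in Set.Ioi (0:ℝ), m {w | ENNReal.ofReal t < h w} := by
  have hinner : ∀ c : ℝ≥0∞,
      ∫⁻ t in Set.Ioi (0:ℝ), {t : ℝ | ENNReal.ofReal t < c}.indicator (fun _ => (1:ℝ≥0∞)) t = c := by
    intro c
    have hms : MeasurableSet {t : ℝ | ENNReal.ofReal t < c} :=
      measurableSet_lt (ENNReal.measurable_ofReal) measurable_const
    rw [lintegral_indicator hms]
    rw [Measure.restrict_restrict hms]
    rw [setLIntegral_one]
    rcases eq_top_or_lt_top c with hc | hc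
    · have hseteq : {t : ℝ | ENNReal.ofReal t < c} ∩ Set.Ioi 0 = Set.Ioi 0 := by
        ext t; simp [hc, ENNReal.ofReal_lt_top]
      rw [hseteq, Real.volume_Ioi, hc]
    · have hset : {t : ℝ | ENNReal.ofReal t < c} ∩ Set.Ioi 0 = Set.Ioo 0 c.toReal := by
        ext t
        simp only [Set.mem_inter_iff, Set.mem_setOf_eq, Set.mem_Ioi, Set.mem_Ioo]
        constructor
        · rintro ⟨h1, h2⟩
          exact ⟨h2, (ENNReal.ofReal_lt_iff_lt_toReal (le_of_lt h2) hc.ne).mp h1⟩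
        · rintro ⟨h1, h2⟩
          exact ⟨(ENNReal.ofReal_lt_iff_lt_toReal (le_of_lt h1) hc.ne).mpr h2, h1⟩
      rw [hset, Real.volume_Ioo, sub_zero, ENNReal.ofReal_toReal hc.ne]
  have hms2 : MeasurableSet {p : W × ℝ | ENNReal.ofReal p.2 < h p.1} := by
    apply measurableSet_lt
    · exact ENNReal.measurable_ofReal.comp measurable_snd
    · exact hm.comp measurable_fst
  calc ∫⁻ w, h w ∂m
      = ∫⁻ w, (∫⁻ t in Set.Ioi (0:ℝ),
          {t : ℝ | ENNReal.ofReal t < h w}.indicator (fun _ => (1:ℝ≥0∞)) t) ∂m := by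
        refine lintegral_congr fun w => (hinner (h w)).symm
    _ = ∫⁻ t in Set.Ioi (0:ℝ), (∫⁻ w,
          {w : W | ENNReal.ofReal t < h w}.indicator (fun _ => (1:ℝ≥0∞)) w ∂m) := by
        have heq1 : ∀ w t, {t : ℝ | ENNReal.ofReal t < h w}.indicator (fun _ => (1:ℝ≥0∞)) t
            = Set.indicator {p : W × ℝ | ENNReal.ofReal p.2 < h p.1} (fun _ => (1:ℝ≥0∞)) (w, t) := by
          intro w t
          by_cases hwt : ENNReal.ofReal t < h w
          · simp [Set.indicator_apply, hwt]
          · simp [Set.indicator_apply, hwt]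
        have heq2 : ∀ w t, {w : W | ENNReal.ofReal t < h w}.indicator (fun _ => (1:ℝ≥0∞)) w
            = Set.indicator {p : W × ℝ | ENNReal.ofReal p.2 < h p.1} (fun _ => (1:ℝ≥0∞)) (w, t) := by
          intro w t
          by_cases hwt : ENNReal.ofReal t < h w
          · simp [Set.indicator_apply, hwt]
          · simp [Set.indicator_apply, hwt]
        calc ∫⁻ w, (∫⁻ t in Set.Ioi (0:ℝ),
              {t : ℝ | ENNReal.ofReal t < h w}.indicator (fun _ => (1:ℝ≥0∞)) t) ∂m
            = ∫⁻ w, (∫⁻ t in Set.Ioi (0:ℝ), Set.indicator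
                {p : W × ℝ | ENNReal.ofReal p.2 < h p.1} (fun _ => (1:ℝ≥0∞)) (w, t)) ∂m := by
              refine lintegral_congr fun w => lintegral_congr fun t => heq1 w t
          _ = ∫⁻ t in Set.Ioi (0:ℝ), (∫⁻ w, Set.indicator
                {p : W × ℝ | ENNReal.ofReal p.2 < h p.1} (fun _ => (1:ℝ≥0∞)) (w, t) ∂m) := by
              apply lintegral_lintegral_swap
              apply Measurable.aemeasurable
              exact (measurable_one.indicator hms2).comp
                (measurable_fst.prodMk measurable_snd)
          _ = _ := by
              refine lintegral_congr fun t => lintegral_congr fun w => (heq2 w t).symm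
    _ = ∫⁻ t in Set.Ioi (0:ℝ), m {w | ENNReal.ofReal t < h w} := by
        refine lintegral_congr fun t => ?_
        have hmsw : MeasurableSet {w : W | ENNReal.ofReal t < h w} :=
          measurableSet_lt measurable_const hm
        rw [lintegral_indicator hmsw, setLIntegral_one]

end Layer

section Envelope
variable {W : Type*} [MeasurableSpace W] (m : Measure W) [SFinite m]

lemma exists_rat_btwn_ennreal {c d : ℝ≥0∞} (hcd : c < d) :
    ∃ q : ℚ, c < ENNReal.ofReal q ∧ ENNReal.ofReal q < d := by
  rcases eq_top_or_lt_top d with hd | hd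
  · obtain ⟨q, hq⟩ := exists_rat_gt c.toReal
    refine ⟨q, ?_, ?_⟩
    · rw [ENNReal.lt_ofReal_iff_toReal_lt (hcd.trans_le le_top).ne]
      exact hq
    · rw [hd]
      exact ENNReal.ofReal_lt_top
  · have hc : c ≠ ⊤ := (hcd.trans hd).ne
    have htr : c.toReal < d.toReal := by
      rw [ENNReal.toReal_lt_toReal hc hd.ne]
      exact hcd
    obtain ⟨q, hq1, hq2⟩ := exists_rat_btwn htr
    have hq0 : (0:ℝ) ≤ q := le_trans ENNReal.toReal_nonneg hq1.le
    refine ⟨q, ?_, ?_⟩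
    · rw [ENNReal.lt_ofReal_iff_toReal_lt hc]
      exact hq1
    · rw [ENNReal.ofReal_lt_iff_lt_toReal hq0 hd.ne]
      exact hq2

lemma exists_measurable_envelope (Ωm : Set W) (hΩm : MeasurableSet Ωm)
    (φ : W → ℝ≥0∞) (hφ : ∀ w, w ∉ Ωm → φ w = 0) :
    ∃ χ : W → ℝ≥0∞, Measurable χ ∧ (∀ w, φ w ≤ χ w) ∧
      ∫⁻ w, χ w ∂m ≤ ∫⁻ t in Set.Ioi (0:ℝ), m {w | ENNReal.ofReal t < φ w} := by
  classical
  set S : ℚ → Set W := fun q => {w | ENNReal.ofReal q < φ w} with hS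
  set T : ℚ → Set W := fun q =>
    Ωm ∩ ⋂ q' : {r : ℚ // r ≤ q}, toMeasurable m (S q'.1) with hT
  have hTmeas : ∀ q, MeasurableSet (T q) :=
    fun q => hΩm.inter (MeasurableSet.iInter fun q' => measurableSet_toMeasurable m _)
  have hTanti : ∀ {q1 q2 : ℚ}, q1 ≤ q2 → T q2 ⊆ T q1 := by
    intro q1 q2 hq w hw
    refine ⟨hw.1, ?_⟩
    refine Set.mem_iInter.mpr fun q' => ?_
    exact Set.mem_iInter.mp hw.2 ⟨q'.1, q'.2.trans hq⟩
  have hST : ∀ q : ℚ, S q ⊆ T q ∪ Ωmᶜ := by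
    intro q w hw
    by_cases hwΩ : w ∈ Ωm
    · left
      refine ⟨hwΩ, Set.mem_iInter.mpr fun q' => ?_⟩
      refine subset_toMeasurable m _ ?_
      have : ENNReal.ofReal (q'.1 : ℝ) ≤ ENNReal.ofReal (q : ℝ) :=
        ENNReal.ofReal_le_ofReal (by exact_mod_cast q'.2)
      exact lt_of_le_of_lt this hw
    · right; exact hwΩ
  set χ : W → ℝ≥0∞ := fun w => ⨆ q : ℚ, (T q).indicator (fun _ => ENNReal.ofReal (q:ℝ)) w with hχ
  have hχmeas : Measurable χ :=
    Measurable.iSup fun q => (measurable_const.indicator (hTmeas q))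
  have hφχ : ∀ w, φ w ≤ χ w := by
    intro w
    rcases eq_or_ne (φ w) 0 with h0 | h0
    · rw [h0]; exact zero_le
    have hwΩ : w ∈ Ωm := by
      by_contra hc
      exact h0 (hφ w hc)
    refine le_of_forall_lt fun c hc => ?_
    obtain ⟨q, hq1, hq2⟩ := exists_rat_btwn_ennreal hc
    have hwT : w ∈ T q := by
      refine ⟨hwΩ, Set.mem_iInter.mpr fun q' => subset_toMeasurable m _ ?_⟩
      have : ENNReal.ofReal (q'.1 : ℝ) ≤ ENNReal.ofReal (q : ℝ) :=
        ENNReal.ofReal_le_ofReal (by exact_mod_cast q'.2)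
      exact lt_of_le_of_lt this hq2
    calc c < ENNReal.ofReal q := hq1
      _ = (T q).indicator (fun _ => ENNReal.ofReal (q:ℝ)) w := by
          rw [Set.indicator_of_mem hwT]
      _ ≤ χ w := le_iSup (fun q => (T q).indicator (fun _ => ENNReal.ofReal (q:ℝ)) w) q
  refine ⟨χ, hχmeas, hφχ, ?_⟩
  rw [lintegral_eq_layercake m χ hχmeas]
  refine lintegral_mono_ae ?_
  filter_upwards [ae_restrict_mem measurableSet_Ioi] with t ht
  -- t > 0
  have hsub : {w | ENNReal.ofReal t < χ w} ⊆ ⋃ q : {q : ℚ | t < q}, T q := by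
    intro w hw
    simp only [Set.mem_setOf_eq, hχ] at hw
    rw [lt_iSup_iff] at hw
    obtain ⟨q, hq⟩ := hw
    have hwT : w ∈ T q := by
      by_contra hc
      rw [Set.indicator_of_notMem hc] at hq
      exact (not_lt_of_ge zero_le) hq
    rw [Set.indicator_of_mem hwT] at hq
    have htq : t < q := by
      by_contra hcon
      push_neg at hcon
      exact absurd (lt_of_lt_of_le hq (ENNReal.ofReal_le_ofReal (by exact_mod_cast hcon)))
        (lt_irrefl _)
    exact Set.mem_iUnion.mpr ⟨⟨q, htq⟩, hwT⟩
  have hdir : Directed (· ⊆ ·) (fun q : {q : ℚ | t < q} => T q.1) := by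
    intro q1 q2
    rcases le_total q1.1 q2.1 with h | h
    · exact ⟨q1, le_refl _, hTanti h⟩
    · exact ⟨q2, hTanti h, le_refl _⟩
  calc m {w | ENNReal.ofReal t < χ w} ≤ m (⋃ q : {q : ℚ | t < q}, T q) := measure_mono hsub
    _ = ⨆ q : {q : ℚ | t < q}, m (T q) := hdir.measure_iUnion
    _ ≤ m {w | ENNReal.ofReal t < φ w} := by
        refine iSup_le fun q => ?_
        have h1 : T q.1 ⊆ toMeasurable m (S q.1) := by
          intro w hw
          exact Set.mem_iInter.mp hw.2 ⟨q.1, le_refl _⟩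
        calc m (T q.1) ≤ m (toMeasurable m (S q.1)) := measure_mono h1
          _ = m (S q.1) := measure_toMeasurable _
          _ ≤ m {w | ENNReal.ofReal t < φ w} := by
              refine measure_mono fun w hw => ?_
              have : ENNReal.ofReal t ≤ ENNReal.ofReal (q.1 : ℝ) :=
                ENNReal.ofReal_le_ofReal (le_of_lt (by exact_mod_cast q.2))
              exact lt_of_le_of_lt this hw

end Envelope

section Mesh
variable {X : Type*} [MetricSpace X] [MeasurableSpace X] [BorelSpace X]

lemma abs_tel (x : ℕ → ℝ) (N : ℕ) :
    ENNReal.ofReal |x N - x 0| ≤ ∑ k ∈ Finset.range N, ENNReal.ofReal |x (k+1) - x k| := by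
  calc ENNReal.ofReal |x N - x 0|
      = ENNReal.ofReal |∑ k ∈ Finset.range N, (x (k+1) - x k)| := by
        rw [Finset.sum_range_sub]
    _ ≤ ENNReal.ofReal (∑ k ∈ Finset.range N, |x (k+1) - x k|) :=
        ENNReal.ofReal_le_ofReal (Finset.abs_sum_le_sum_abs _ _)
    _ = ∑ k ∈ Finset.range N, ENNReal.ofReal |x (k+1) - x k| :=
        ENNReal.ofReal_sum_of_nonneg fun k _ => abs_nonneg _

lemma lintegral_Ioc_tel (G : ℝ → ℝ≥0∞) (c : ℕ → ℝ) (hc : Monotone c) (N : ℕ) :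
    ∑ k ∈ Finset.range N, ∫⁻ s in Set.Ioc (c k) (c (k+1)), G s
      = ∫⁻ s in Set.Ioc (c 0) (c N), G s := by
  induction N with
  | zero => simp
  | succ N ih =>
      rw [Finset.sum_range_succ, ih]
      rw [← lintegral_union measurableSet_Ioc
        (Set.Ioc_disjoint_Ioc_of_le (a := c 0) (b := c N) (c := c N) (d := c (N+1)) le_rfl)]
      rw [Set.Ioc_union_Ioc_eq_Ioc (hc (Nat.zero_le N)) (hc (Nat.le_succ N))]

lemma mesh_upper_gradient {Ω : Set X} (hΩopen : IsOpen Ω) {f : X → ℝ} {g g₀ : X → ℝ≥0∞}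
    (hgme : Measurable g) (hg₀me : Measurable g₀)
    (hg : IsUpperGradientWith (fun x y => edist x y) Ω g (fun y => (f y : EReal)))
    (hg₀ : IsUpperGradientWith (fun x y => edist x y) (closure Ω) g₀ (fun y => (f y : EReal)))
    {δ : ℝ} (hδ : 0 < δ) :
    IsUpperGradientWith (fun x y => edist x y) (closure Ω)
      (fun x => g x + ({x : X | EMetric.infEdist x (closure Ω \ Ω) < ENNReal.ofReal (2*δ)}).indicator g₀ x)
      (fun y => (f y : EReal)) := by
  intro γ L hL hmap hal
  set F : Set X := closure Ω \ Ω with hF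
  set B : Set X := {x : X | EMetric.infEdist x F < ENNReal.ofReal (2*δ)} with hB
  set gB : X → ℝ≥0∞ := fun x => g x + B.indicator g₀ x with hgB
  have hgBme : Measurable gB := by
    have hBmeas : MeasurableSet B :=
      (isOpen_lt (EMetric.continuous_infEdist) continuous_const).measurableSet
    exact hgme.add (hg₀me.indicator hBmeas)
  have hγcont : ContinuousOn γ (Set.Icc 0 L) := hal.continuousOn
  set γb : ℝ → X := fun t => γ (clampI 0 L t) with hγb
  have hγbcont : Continuous γb :=
    hγcont.comp_continuous (continuous_clampI 0 L) (fun t => clampI_mem hL.le t)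
  have hγbeq : ∀ t ∈ Set.Icc 0 L, γb t = γ t := fun t ht => by rw [hγb]; simp only; rw [clampI_of_mem ht]
  -- choose mesh size
  obtain ⟨N, hN⟩ := exists_nat_gt (L / δ)
  have hN0 : 0 < N := by
    have h1 : 0 < L / δ := div_pos hL hδ
    have h2 : (0:ℝ) < N := lt_trans h1 hN
    exact_mod_cast h2
  have hstep : L / N < δ := by
    rw [div_lt_iff₀ (show (0:ℝ) < N by exact_mod_cast hN0)]
    calc L = (L / δ) * δ := by field_simp
      _ < N * δ := mul_lt_mul_of_pos_right hN hδ
      _ = δ * N := by ring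
  have hstep0 : 0 < L / N := div_pos hL (by exact_mod_cast hN0)
  set c : ℕ → ℝ := fun k => k * (L / N) with hc
  have hcmono : Monotone c := by
    intro i j hij
    have : (i:ℝ) ≤ j := by exact_mod_cast hij
    simp only [hc]
    nlinarith
  have hc0 : c 0 = 0 := by simp [hc]
  have hcN : c N = L := by
    simp only [hc]
    field_simp
  have hcIcc : ∀ k, k ≤ N → c k ∈ Set.Icc 0 L := by
    intro k hk
    constructor
    · simp only [hc]; positivity
    · rw [← hcN]
      exact hcmono hk
  have hcstep : ∀ k, c (k+1) - c k = L / N := by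
    intro k
    simp only [hc]
    push_cast
    ring
  -- per-piece estimate
  have hpiece : ∀ k, k < N →
      erealAbs ((f (γ (c (k+1))) : EReal) - (f (γ (c k)) : EReal))
        ≤ ∫⁻ s in Set.Ioc (c k) (c (k+1)), gB (γb s) := by
    intro k hk
    have hk1 : k + 1 ≤ N := hk
    have hcc : c k < c (k+1) := by
      have := hcstep k
      linarith
    have h0k : 0 ≤ c k := (hcIcc k (le_of_lt hk)).1
    have hkL : c (k+1) ≤ L := (hcIcc (k+1) hk1).2
    have hsub : Set.Icc (c k) (c (k+1)) ⊆ Set.Icc 0 L := Set.Icc_subset_Icc h0k hkL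
    have hICC : ∫⁻ s in Set.Icc (c k) (c (k+1)), gB (γ (clampI (c k) (c (k+1)) s))
        = ∫⁻ s in Set.Ioc (c k) (c (k+1)), gB (γb s) := by
      have e1 : ∫⁻ s in Set.Icc (c k) (c (k+1)), gB (γ (clampI (c k) (c (k+1)) s))
          = ∫⁻ s in Set.Icc (c k) (c (k+1)), gB (γb s) := by
        refine setLIntegral_congr_fun measurableSet_Icc ?_
        intro s hs
        dsimp only
        rw [clampI_of_mem hs, hγbeq s (hsub hs)]
      rw [e1]
      exact (setLIntegral_congr Ioc_ae_eq_Icc).symm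
    by_cases hFk : ∃ τ ∈ Set.Icc (c k) (c (k+1)), γ τ ∈ F
    · -- boundary piece: use g₀
      obtain ⟨τ, hτmem, hτF⟩ := hFk
      have happ := hg₀.subcurve hal hcc h0k hkL (fun t ht => hmap (hsub ht)) hg₀me
      refine le_trans happ ?_
      rw [← hICC]
      refine lintegral_mono_ae ?_
      filter_upwards [ae_restrict_mem measurableSet_Icc] with s hs
      have hclmem : clampI (c k) (c (k+1)) s ∈ Set.Icc (c k) (c (k+1)) :=
        clampI_mem hcc.le s
      have hBmem : γ (clampI (c k) (c (k+1)) s) ∈ B := by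
        rw [hB]
        simp only [Set.mem_setOf_eq]
        have hdist : edist (γ (clampI (c k) (c (k+1)) s)) (γ τ) ≤ ENNReal.ofReal (L / N) := by
          rcases le_total (clampI (c k) (c (k+1)) s) τ with hle | hle
          · refine le_trans (hal.edist_le (hsub hclmem) (hsub hτmem) hle) ?_
            apply ENNReal.ofReal_le_ofReal
            have := hcstep k
            have h1 := hclmem.1
            have h2 := hτmem.2
            linarith
          · rw [edist_comm]
            refine le_trans (hal.edist_le (hsub hτmem) (hsub hclmem) hle) ?_
            apply ENNReal.ofReal_le_ofReal
            have := hcstep k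
            have h1 := hclmem.2
            have h2 := hτmem.1
            linarith
        calc EMetric.infEdist (γ (clampI (c k) (c (k+1)) s)) F
            ≤ edist (γ (clampI (c k) (c (k+1)) s)) (γ τ) := EMetric.infEdist_le_edist_of_mem hτF
          _ ≤ ENNReal.ofReal (L / N) := hdist
          _ < ENNReal.ofReal (2*δ) := by
              rw [ENNReal.ofReal_lt_ofReal_iff (by linarith)]
              linarith
      calc g₀ (γ (clampI (c k) (c (k+1)) s))
          ≤ B.indicator g₀ (γ (clampI (c k) (c (k+1)) s)) := by
            rw [Set.indicator_of_mem hBmem]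
        _ ≤ gB (γ (clampI (c k) (c (k+1)) s)) := le_add_self
    · -- interior piece: use g
      push_neg at hFk
      have hmapΩ : Set.MapsTo γ (Set.Icc (c k) (c (k+1))) Ω := by
        intro t ht
        have h1 : γ t ∈ closure Ω := hmap (hsub ht)
        by_contra hc'
        exact absurd ⟨h1, hc'⟩ (hFk t ht)
      have happ := hg.subcurve hal hcc h0k hkL hmapΩ hgme
      refine le_trans happ ?_
      rw [← hICC]
      refine lintegral_mono_ae ?_
      filter_upwards [ae_restrict_mem measurableSet_Icc] with s hs
      exact le_add_right (le_refl _)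
  -- assemble
  have htel := abs_tel (fun k => f (γ (c k))) N
  rw [hc0, hcN] at htel
  have hsum : ∑ k ∈ Finset.range N, ∫⁻ s in Set.Ioc (c k) (c (k+1)), gB (γb s)
      = ∫⁻ s in Set.Ioc 0 L, gB (γb s) := by
    rw [lintegral_Ioc_tel _ c hcmono N, hc0, hcN]
  calc erealAbs ((f (γ L) : EReal) - (f (γ 0) : EReal))
      = ENNReal.ofReal |f (γ L) - f (γ 0)| := erealAbs_coe_sub _ _
    _ ≤ ∑ k ∈ Finset.range N, ENNReal.ofReal |f (γ (c (k+1))) - f (γ (c k))| := htel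
    _ = ∑ k ∈ Finset.range N, erealAbs ((f (γ (c (k+1))) : EReal) - (f (γ (c k)) : EReal)) := by
        refine Finset.sum_congr rfl fun k _ => (erealAbs_coe_sub _ _).symm
    _ ≤ ∑ k ∈ Finset.range N, ∫⁻ s in Set.Ioc (c k) (c (k+1)), gB (γb s) :=
        Finset.sum_le_sum fun k hk => hpiece k (Finset.mem_range.mp hk)
    _ = ∫⁻ s in Set.Ioc 0 L, gB (γb s) := hsum
    _ = ∫⁻ s in Set.Icc 0 L, gB (γb s) := setLIntegral_congr Ioc_ae_eq_Icc
    _ = ∫⁻ s in Set.Icc 0 L, gB (γ s) := by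
        refine setLIntegral_congr_fun measurableSet_Icc ?_
        exact fun s hs => by rw [hγbeq s hs]

end Mesh

section DirA
variable {X : Type*} [MetricSpace X] [MeasurableSpace X] [BorelSpace X]

lemma ennreal_add_rpow_le (a b : ℝ≥0∞) {p : ℝ} (hp : 0 ≤ p) :
    (a + b) ^ p ≤ 2 ^ p * (a ^ p + b ^ p) := by
  have h1 : a + b ≤ 2 * (a ⊔ b) := by
    rw [two_mul]
    exact add_le_add le_sup_left le_sup_right
  calc (a + b) ^ p ≤ (2 * (a ⊔ b)) ^ p := ENNReal.rpow_le_rpow h1 hp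
    _ = 2 ^ p * (a ⊔ b) ^ p := ENNReal.mul_rpow_of_nonneg _ _ hp
    _ ≤ 2 ^ p * (a ^ p + b ^ p) := by
        refine mul_le_mul_right ?_ _
        rcases le_total a b with h | h
        · rw [sup_eq_right.mpr h]
          exact le_add_self
        · rw [sup_eq_left.mpr h]
          exact le_self_add

lemma restrict_closure_eq (μ : Measure X) {Ω : Set X} (hΩm : MeasurableSet Ω)
    (h : X → ℝ≥0∞) :
    ∫⁻ y in closure Ω, h y ∂(μ.restrict Ω) = ∫⁻ y in Ω, h y ∂μ := by
  rw [Measure.restrict_restrict isClosed_closure.measurableSet]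
  rw [Set.inter_eq_self_of_subset_right subset_closure]

lemma dirA (μ : Measure X) {Ω : Set X} (hΩopen : IsOpen Ω) {p : ℝ} (hp : 1 < p)
    {f : X → ℝ} {g₀ : X → ℝ≥0∞} (hg₀me : Measurable g₀)
    (hg₀ : IsUpperGradientWith (fun x y => edist x y) (closure Ω) g₀ (fun y => (f y : EReal)))
    (hg₀fin : ∫⁻ y in Ω, g₀ y ^ p ∂μ ≠ ⊤)
    {g : X → ℝ≥0∞} (hgme : Measurable g)
    (hg : IsUpperGradientWith (fun x y => edist x y) Ω g (fun y => (f y : EReal))) :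
    (⨅ g' ∈ {g' : X → ℝ≥0∞ | Measurable g' ∧ IsUpperGradientWith (fun x y => edist x y)
        (closure Ω) g' (fun y => (f y : EReal))}, ∫⁻ y in closure Ω, g' y ^ p ∂(μ.restrict Ω))
      ≤ ∫⁻ y in Ω, g y ^ p ∂μ := by
  have hΩm : MeasurableSet Ω := hΩopen.measurableSet
  have hp0 : (0:ℝ) ≤ p := by linarith
  by_cases hfin : ∫⁻ y in Ω, g y ^ p ∂μ = ⊤
  · rw [hfin]; exact le_top
  set F : Set X := closure Ω \ Ω with hFdef
  have hFclosed : IsClosed F := isClosed_closure.inter hΩopen.isClosed_compl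
  set B : ℕ → Set X := fun n =>
    {x : X | EMetric.infEdist x F < ENNReal.ofReal (2 * (1 / (n+1 : ℝ)))} with hBdef
  have hBmeas : ∀ n, MeasurableSet (B n) := fun n =>
    (isOpen_lt (EMetric.continuous_infEdist) continuous_const).measurableSet
  set gB : ℕ → X → ℝ≥0∞ := fun n x => g x + (B n).indicator g₀ x with hgBdef
  have hgBme : ∀ n, Measurable (gB n) := fun n => hgme.add (hg₀me.indicator (hBmeas n))
  have hδpos : ∀ n : ℕ, (0:ℝ) < 1 / (n+1 : ℝ) := fun n => by positivity
  have hUG : ∀ n, IsUpperGradientWith (fun x y => edist x y) (closure Ω) (gB n)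
      (fun y => (f y : EReal)) := fun n =>
    mesh_upper_gradient hΩopen hgme hg₀me hg hg₀ (hδpos n)
  have hle : ∀ n, (⨅ g' ∈ {g' : X → ℝ≥0∞ | Measurable g' ∧ IsUpperGradientWith
        (fun x y => edist x y) (closure Ω) g' (fun y => (f y : EReal))},
        ∫⁻ y in closure Ω, g' y ^ p ∂(μ.restrict Ω))
      ≤ ∫⁻ y in Ω, gB n y ^ p ∂μ := by
    intro n
    refine le_trans (iInf₂_le (gB n) ⟨hgBme n, hUG n⟩) ?_
    rw [restrict_closure_eq μ hΩm]
  have htend : Filter.Tendsto (fun n => ∫⁻ y in Ω, gB n y ^ p ∂μ) Filter.atTop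
      (𝓝 (∫⁻ y in Ω, g y ^ p ∂μ)) := by
    refine tendsto_lintegral_of_dominated_convergence
      (fun x => 2 ^ p * (g x ^ p + g₀ x ^ p))
      (fun n => ((hgBme n).pow_const p)) ?_ ?_ ?_
    · intro n
      refine Filter.Eventually.of_forall fun x => ?_
      calc gB n x ^ p ≤ (g x + g₀ x) ^ p := by
            refine ENNReal.rpow_le_rpow ?_ hp0
            exact add_le_add_right (Set.indicator_le_self _ _ x) _
        _ ≤ 2 ^ p * (g x ^ p + g₀ x ^ p) := ennreal_add_rpow_le _ _ hp0
    · rw [lintegral_const_mul _ (f := fun x => g x ^ p + g₀ x ^ p) ((hgme.pow_const p).add (hg₀me.pow_const p))]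
      rw [lintegral_add_left (hgme.pow_const p)]
      refine ENNReal.mul_ne_top ?_ ?_
      · exact (ENNReal.rpow_lt_top_of_nonneg hp0 ENNReal.ofNat_ne_top).ne
      · exact ENNReal.add_ne_top.mpr ⟨hfin, hg₀fin⟩
    · filter_upwards [ae_restrict_mem hΩm] with x hx
      have hxF : x ∉ F := fun hxF => hxF.2 hx
      have hpos : 0 < EMetric.infEdist x F := by
        refine EMetric.infEdist_pos_iff_notMem_closure.mpr ?_
        rw [hFclosed.closure_eq]
        exact hxF
      have htends : Filter.Tendsto (fun n : ℕ => ENNReal.ofReal (2 * (1 / (n+1 : ℝ))))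
          Filter.atTop (𝓝 0) := by
        rw [show (0:ℝ≥0∞) = ENNReal.ofReal 0 by simp]
        refine ENNReal.tendsto_ofReal ?_
        have h2 : Filter.Tendsto (fun n : ℕ => 1 / (n+1 : ℝ)) Filter.atTop (𝓝 0) :=
          tendsto_one_div_add_atTop_nhds_zero_nat
        have := h2.const_mul (2:ℝ)
        simpa using this
      have hev : ∀ᶠ n : ℕ in Filter.atTop,
          ENNReal.ofReal (2 * (1 / (n+1 : ℝ))) < EMetric.infEdist x F :=
        htends.eventually_lt_const hpos
      refine Filter.Tendsto.congr' ?_ tendsto_const_nhds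
      filter_upwards [hev] with n hn
      have hxB : x ∉ B n := by
        rw [hBdef]
        simp only [Set.mem_setOf_eq, not_lt]
        exact hn.le
      simp only [hgBdef, Set.indicator_of_notMem hxB, add_zero]
  exact ge_of_tendsto' htend hle

end DirA

open scoped Classical

section Trans
variable {X : Type*} [MetricSpace X] {Z : Type*} [MetricSpace Z]
  {Ω : Set X} {ι : Ω → Z} {Φ : Z → X}

lemma diam_image_le_variation {γ : ℝ → X} {u v : ℝ} (huv : u ≤ v) :
    EMetric.diam (γ '' Set.Icc u v) ≤ variationWith (fun x y => edist x y) γ u v := by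
  refine EMetric.diam_le ?_
  rintro e ⟨w, hw, rfl⟩ e' ⟨w', hw', rfl⟩
  rcases le_total w w' with h | h
  · exact le_trans (pair_le_variationWith _ γ h)
      (variationWith_mono_interval _ γ h hw.1 hw'.2)
  · rw [edist_comm]
    exact le_trans (pair_le_variationWith _ γ h)
      (variationWith_mono_interval _ γ h hw'.1 hw.2)

lemma phi_mem_closure (hdense : DenseRange ι) (hΦcont : Continuous Φ)
    (hΦι : ∀ x : Ω, Φ (ι x) = (x : X)) (z : Z) : Φ z ∈ closure Ω := by
  have h1 : z ∈ closure (Set.range ι) := hdense z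
  have h2 : Φ z ∈ Φ '' closure (Set.range ι) := Set.mem_image_of_mem Φ h1
  have h3 : Φ '' closure (Set.range ι) ⊆ closure (Φ '' Set.range ι) :=
    image_closure_subset_closure_image hΦcont
  refine closure_mono ?_ (h3 h2)
  rintro x ⟨z', ⟨ω, rfl⟩, rfl⟩
  rw [hΦι ω]
  exact ω.2

lemma phi_comp_arc (hι : ∀ x y : Ω, edist (ι x) (ι y) = mazDist Ω (x : X) (y : X))
    (hdense : DenseRange ι) (hΦ : LipschitzWith 1 Φ) (hΦι : ∀ x : Ω, Φ (ι x) = (x : X))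
    {γ : ℝ → Z} {L : ℝ}
    (hal : IsArcLengthParamWith (fun x y => edist x y) γ L) :
    IsArcLengthParamWith (fun x y => edist x y) (fun t => Φ (γ t)) L := by
  intro s t hs ht hst
  refine le_antisymm ?_ ?_
  · refine le_trans (variationWith_map_le _ γ _ Φ ?_) (le_of_eq (hal s t hs ht hst))
    intro u v _ _
    simpa using hΦ (γ u) (γ v)
  · rw [← hal s t hs ht hst]
    refine variationWith_le_of_forall_sum_le _ _ fun P h1 h2 h3 h4 => ?_
    calc ∑ i ∈ Finset.range P.1, edist (γ (P.2 i)) (γ (P.2 (i+1)))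
        ≤ ∑ i ∈ Finset.range P.1,
            variationWith (fun x y => edist x y) (fun u => Φ (γ u)) (P.2 i) (P.2 (i+1)) := by
          refine Finset.sum_le_sum fun i _ => ?_
          have hilo : 0 ≤ P.2 i := le_trans hs.1 (h2 i).1
          have hihi : P.2 (i+1) ≤ L := le_trans (h2 (i+1)).2 ht.2
          have hstepmono : P.2 i ≤ P.2 (i+1) := h1 (Nat.le_succ i)
          refine le_trans (edist_le_diam_image hι hdense hΦ hΦι
            (fun u v hu hv huv => hal.edist_le hu hv huv) hilo hstepmono hihi) ?_
          exact diam_image_le_variation hstepmono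
      _ ≤ variationWith (fun x y => edist x y) (fun u => Φ (γ u)) (P.2 0) (P.2 P.1) :=
          variationWith_sum_chain _ _ P.2 h1 P.1
      _ = variationWith (fun x y => edist x y) (fun u => Φ (γ u)) s t := by rw [h3, h4]

lemma iota_comp_arc (hι : ∀ x y : Ω, edist (ι x) (ι y) = mazDist Ω (x : X) (y : X))
    (hΦ : LipschitzWith 1 Φ) (hΦι : ∀ x : Ω, Φ (ι x) = (x : X)) (z₀ : Z)
    {γ : ℝ → X} {L : ℝ} (hL : 0 < L)
    (hal : IsArcLengthParamWith (fun x y => edist x y) γ L)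
    (hmap : Set.MapsTo γ (Set.Icc 0 L) Ω) :
    IsArcLengthParamWith (fun x y => edist x y)
      (fun t => if h : γ (clampI 0 L t) ∈ Ω then ι ⟨γ (clampI 0 L t), h⟩ else z₀) L := by
  set γb : ℝ → X := fun t => γ (clampI 0 L t) with hγb
  have hγbcont : Continuous γb :=
    hal.continuousOn.comp_continuous (continuous_clampI 0 L) (fun t => clampI_mem hL.le t)
  have hγbeq : ∀ t ∈ Set.Icc 0 L, γb t = γ t := fun t ht => by
    rw [hγb]; simp only; rw [clampI_of_mem ht]
  set γZ : ℝ → Z := fun t => if h : γb t ∈ Ω then ι ⟨γb t, h⟩ else z₀ with hγZ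
  have hγZval : ∀ t ∈ Set.Icc 0 L, ∃ h : γ t ∈ Ω, γZ t = ι ⟨γ t, h⟩ := by
    intro t ht
    have h1 : γb t = γ t := hγbeq t ht
    have h2 : γ t ∈ Ω := hmap ht
    refine ⟨h2, ?_⟩
    rw [hγZ]
    simp only
    rw [dif_pos (h1 ▸ h2)]
    congr 1
    exact Subtype.ext h1
  intro s t hs ht hst
  have hsubIcc : Set.Icc s t ⊆ Set.Icc 0 L := Set.Icc_subset_Icc hs.1 ht.2
  refine le_antisymm ?_ ?_
  · refine variationWith_le_of_forall_sum_le _ _ fun P h1 h2 h3 h4 => ?_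
    have key : ∀ i : ℕ, edist (γZ (P.2 i)) (γZ (P.2 (i+1)))
        ≤ variationWith (fun x y => edist x y) γ (P.2 i) (P.2 (i+1)) := by
      intro i
      have hui : P.2 i ∈ Set.Icc 0 L := hsubIcc (h2 i)
      have hui1 : P.2 (i+1) ∈ Set.Icc 0 L := hsubIcc (h2 (i+1))
      have hmono : P.2 i ≤ P.2 (i+1) := h1 (Nat.le_succ i)
      obtain ⟨hΩi, hvi⟩ := hγZval _ hui
      obtain ⟨hΩi1, hvi1⟩ := hγZval _ hui1
      rw [hvi, hvi1, hι]
      have hconn : IsConnected (γb '' Set.Icc (P.2 i) (P.2 (i+1))) := by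
        refine ⟨(Set.nonempty_Icc.mpr hmono).image _, ?_⟩
        exact (isPreconnected_Icc).image γb (hγbcont.continuousOn)
      have hsubΩ : γb '' Set.Icc (P.2 i) (P.2 (i+1)) ⊆ Ω := by
        rintro x ⟨w, hw, rfl⟩
        have hwIcc : w ∈ Set.Icc 0 L := Set.Icc_subset_Icc hui.1 hui1.2 hw
        rw [hγbeq w hwIcc]
        exact hmap hwIcc
      have hmem1 : γ (P.2 i) ∈ γb '' Set.Icc (P.2 i) (P.2 (i+1)) :=
        ⟨P.2 i, Set.left_mem_Icc.mpr hmono, hγbeq _ hui⟩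
      have hmem2 : γ (P.2 (i+1)) ∈ γb '' Set.Icc (P.2 i) (P.2 (i+1)) :=
        ⟨P.2 (i+1), Set.right_mem_Icc.mpr hmono, hγbeq _ hui1⟩
      refine le_trans (mazDist_le_diam hsubΩ hconn hmem1 hmem2) ?_
      have hdiam : EMetric.diam (γb '' Set.Icc (P.2 i) (P.2 (i+1)))
          = EMetric.diam (γ '' Set.Icc (P.2 i) (P.2 (i+1))) := by
        congr 1
        refine Set.image_congr fun w hw => hγbeq w (Set.Icc_subset_Icc hui.1 hui1.2 hw)
      rw [hdiam]
      exact diam_image_le_variation hmono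
    calc ∑ i ∈ Finset.range P.1, edist (γZ (P.2 i)) (γZ (P.2 (i+1)))
        ≤ ∑ i ∈ Finset.range P.1,
            variationWith (fun x y => edist x y) γ (P.2 i) (P.2 (i+1)) :=
          Finset.sum_le_sum fun i _ => key i
      _ ≤ variationWith (fun x y => edist x y) γ (P.2 0) (P.2 P.1) :=
          variationWith_sum_chain _ _ P.2 h1 P.1
      _ = ENNReal.ofReal (t - s) := by rw [h3, h4]; exact hal s t hs ht hst
  · rw [← hal s t hs ht hst]
    have e1 : variationWith (fun x y => edist x y) γ s t
        = variationWith (fun x y => edist x y) (fun u => Φ (γZ u)) s t := by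
      refine variationWith_congr _ _ _ fun u hu => ?_
      obtain ⟨hΩu, hvu⟩ := hγZval u (hsubIcc hu)
      rw [hvu, hΦι]
    rw [e1]
    refine variationWith_map_le _ γZ _ Φ ?_
    intro u v _ _
    simpa using hΦ (γZ u) (γZ v)

end Trans

/-! ### Statement 7 -/

theorem statement7 {X : Type*} [MetricSpace X] [CompleteSpace X]
    [MeasurableSpace X] [BorelSpace X]
    (μ : Measure X) (hμc : μ.IsComplete) (hball : BallRegular μ)
    (hdbl : DoublingMeasure' μ) (p : ℝ) (hp : 1 < p) (hPI : PoincareInequality μ p)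
    (Ω : Set X) (hΩ : IsBoundedDomain Ω) (hfc : FinConnAtBoundary Ω)
    (Z : Type*) [MetricSpace Z] [CompleteSpace Z] [MeasurableSpace Z] [BorelSpace Z]
    (ι : Ω → Z) (hι : ∀ x y : Ω, edist (ι x) (ι y) = mazDist Ω (x : X) (y : X))
    (hdense : DenseRange ι) (ν : Measure Z)
    (hν : ∀ A : Set Z, MeasurableSet A → ν A = μ (Subtype.val '' (ι ⁻¹' A)))
    (Φ : Z → X) (hΦ : LipschitzWith 1 Φ) (hΦι : ∀ x : Ω, Φ (ι x) = (x : X))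
    (f : X → ℝ) (hf : MemNp (μ.restrict Ω) p (closure Ω) f) :
    MemNp ν p (Set.univ : Set Z) (f ∘ Φ) ∧
    npEnergyOn ν p (Set.univ : Set Z) (f ∘ Φ) = npEnergyOn μ p Ω f ∧
    npEnergyOn μ p Ω f = npEnergyOn (μ.restrict Ω) p (closure Ω) f := by
  classical
  obtain ⟨hΩopen, hΩconn, hΩbdd⟩ := hΩ
  have hΩm : MeasurableSet Ω := hΩopen.measurableSet
  have hΦmeas : Measurable Φ := hΦ.continuous.measurable
  have hfm : Measurable f := hf.1
  have hp0 : (0:ℝ) ≤ p := by linarith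
  have hpne : p ≠ 0 := by linarith
  obtain ⟨x₀, hx₀⟩ := hΩconn.nonempty
  set z₀ : Z := ι ⟨x₀, hx₀⟩ with hz₀
  have hμΩfin : μ Ω < ⊤ := by
    obtain ⟨r, hr⟩ := hΩbdd.subset_closedBall x₀
    have hsub : Ω ⊆ Metric.ball x₀ (max r 0 + 1) := by
      refine hr.trans (Metric.closedBall_subset_ball ?_)
      have : r ≤ max r 0 := le_max_left r 0
      linarith
    exact lt_of_le_of_lt (measure_mono hsub) (hball x₀ _ (by positivity)).2
  haveI : IsFiniteMeasure (μ.restrict Ω) := by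
    constructor
    rwa [Measure.restrict_apply_univ]
  have hmapν : ν.map Φ = μ.restrict Ω := by
    refine Measure.ext fun A hA => ?_
    rw [Measure.map_apply hΦmeas hA, hν _ (hΦmeas hA)]
    have him : Subtype.val '' (ι ⁻¹' (Φ ⁻¹' A)) = A ∩ Ω := by
      ext x
      constructor
      · rintro ⟨ω, hω, rfl⟩
        rw [Set.mem_preimage, Set.mem_preimage, hΦι ω] at hω
        exact ⟨hω, ω.2⟩
      · rintro ⟨hxA, hxΩ⟩
        refine ⟨⟨x, hxΩ⟩, ?_, rfl⟩
        rw [Set.mem_preimage, Set.mem_preimage, hΦι ⟨x, hxΩ⟩]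
        exact hxA
    rw [him, Measure.restrict_apply hA]
  haveI : IsFiniteMeasure ν := by
    constructor
    rw [hν Set.univ MeasurableSet.univ]
    have : Subtype.val '' (ι ⁻¹' (Set.univ : Set Z)) = Ω := by
      rw [Set.preimage_univ, Set.image_univ, Subtype.range_coe]
    rwa [this]
  have hintΦ : ∀ k : X → ℝ≥0∞, Measurable k →
      ∫⁻ z, k (Φ z) ∂ν = ∫⁻ y in Ω, k y ∂μ := by
    intro k hk
    rw [← lintegral_map hk hΦmeas, hmapν]
  have eqIpart : ∫⁻ z in Set.univ, ENNReal.ofReal |(f ∘ Φ) z| ^ p ∂ν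
      = ∫⁻ y in Ω, ENNReal.ofReal |f y| ^ p ∂μ := by
    rw [Measure.restrict_univ]
    exact hintΦ (fun y => ENNReal.ofReal |f y| ^ p)
      ((hfm.abs.ennreal_ofReal).pow_const p)
  -- extract from hf a finite-energy upper gradient on the closure
  have hfin2 := hf.2
  simp only [npEnergyOn, npEnergyWith] at hfin2
  obtain ⟨hIclfin, hInffin⟩ := ENNReal.add_ne_top.mp hfin2
  have hlt : (⨅ g ∈ {g : X → ℝ≥0∞ | Measurable g ∧ IsUpperGradientWith
      (fun x y => edist x y) (closure Ω) g (fun y => (f y : EReal))},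
      ∫⁻ y in closure Ω, g y ^ p ∂(μ.restrict Ω)) < ⊤ := lt_top_iff_ne_top.mpr hInffin
  rw [iInf_lt_iff] at hlt
  obtain ⟨g₀, hg₀'⟩ := hlt
  rw [iInf_lt_iff] at hg₀'
  obtain ⟨hg₀mem, hg₀lt⟩ := hg₀'
  have hg₀fin : ∫⁻ y in Ω, g₀ y ^ p ∂μ ≠ ⊤ := by
    rw [← restrict_closure_eq μ hΩm]
    exact hg₀lt.ne
  -- (1) infΩ ≤ infcl
  have h1 : (⨅ g ∈ {g : X → ℝ≥0∞ | Measurable g ∧ IsUpperGradientWith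
        (fun x y => edist x y) Ω g (fun y => (f y : EReal))}, ∫⁻ y in Ω, g y ^ p ∂μ)
      ≤ ⨅ g ∈ {g : X → ℝ≥0∞ | Measurable g ∧ IsUpperGradientWith
        (fun x y => edist x y) (closure Ω) g (fun y => (f y : EReal))},
        ∫⁻ y in closure Ω, g y ^ p ∂(μ.restrict Ω) := by
    refine le_iInf₂ fun g hg => ?_
    rw [restrict_closure_eq μ hΩm]
    exact iInf₂_le g ⟨hg.1, fun γ L hL hmap hal =>
      hg.2 γ L hL (fun t ht => subset_closure (hmap ht)) hal⟩
  -- (4) infcl ≤ infΩ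
  have h4 : (⨅ g ∈ {g : X → ℝ≥0∞ | Measurable g ∧ IsUpperGradientWith
        (fun x y => edist x y) (closure Ω) g (fun y => (f y : EReal))},
        ∫⁻ y in closure Ω, g y ^ p ∂(μ.restrict Ω))
      ≤ ⨅ g ∈ {g : X → ℝ≥0∞ | Measurable g ∧ IsUpperGradientWith
        (fun x y => edist x y) Ω g (fun y => (f y : EReal))}, ∫⁻ y in Ω, g y ^ p ∂μ := by
    refine le_iInf₂ fun g hg => ?_
    exact dirA μ hΩopen hp hg₀mem.1 hg₀mem.2 hg₀fin hg.1 hg.2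
  -- (3) infZ ≤ infcl
  have h3 : (⨅ g ∈ {g : Z → ℝ≥0∞ | Measurable g ∧ IsUpperGradientWith
        (fun x y => edist x y) (Set.univ : Set Z) g (fun z => ((f ∘ Φ) z : EReal))},
        ∫⁻ z in Set.univ, g z ^ p ∂ν)
      ≤ ⨅ g ∈ {g : X → ℝ≥0∞ | Measurable g ∧ IsUpperGradientWith
        (fun x y => edist x y) (closure Ω) g (fun y => (f y : EReal))},
        ∫⁻ y in closure Ω, g y ^ p ∂(μ.restrict Ω) := by
    refine le_iInf₂ fun g hg => ?_
    have hUGZ : IsUpperGradientWith (fun x y => edist x y) (Set.univ : Set Z)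
        (fun z => g (Φ z)) (fun z => ((f ∘ Φ) z : EReal)) := by
      intro γ L hL hmapZ hal
      exact hg.2 (fun t => Φ (γ t)) L hL
        (fun t _ => phi_mem_closure hdense hΦ.continuous hΦι (γ t))
        (phi_comp_arc hι hdense hΦ hΦι hal)
    calc (⨅ g' ∈ {g' : Z → ℝ≥0∞ | Measurable g' ∧ IsUpperGradientWith
          (fun x y => edist x y) (Set.univ : Set Z) g' (fun z => ((f ∘ Φ) z : EReal))},
          ∫⁻ z in Set.univ, g' z ^ p ∂ν)
        ≤ ∫⁻ z in Set.univ, (g (Φ z)) ^ p ∂ν :=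
          iInf₂_le (fun z => g (Φ z)) ⟨hg.1.comp hΦmeas, hUGZ⟩
      _ = ∫⁻ y in Ω, g y ^ p ∂μ := by
          rw [Measure.restrict_univ]
          exact hintΦ (fun y => g y ^ p) (hg.1.pow_const p)
      _ = ∫⁻ y in closure Ω, g y ^ p ∂(μ.restrict Ω) := (restrict_closure_eq μ hΩm _).symm
  -- (2) infΩ ≤ infZ
  have h2 : (⨅ g ∈ {g : X → ℝ≥0∞ | Measurable g ∧ IsUpperGradientWith
        (fun x y => edist x y) Ω g (fun y => (f y : EReal))}, ∫⁻ y in Ω, g y ^ p ∂μ)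
      ≤ ⨅ g ∈ {g : Z → ℝ≥0∞ | Measurable g ∧ IsUpperGradientWith
        (fun x y => edist x y) (Set.univ : Set Z) g (fun z => ((f ∘ Φ) z : EReal))},
        ∫⁻ z in Set.univ, g z ^ p ∂ν := by
    refine le_iInf₂ fun g' hg' => ?_
    obtain ⟨hg'me, hg'UG⟩ := hg'
    set h : Z → ℝ≥0∞ := fun z => g' z ^ p with hh
    have hhme : Measurable h := hg'me.pow_const p
    set φ : X → ℝ≥0∞ := fun x => if hx : x ∈ Ω then h (ι ⟨x, hx⟩) else 0 with hφdef
    have hφ0 : ∀ w, w ∉ Ω → φ w = 0 := fun w hw => dif_neg hw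
    obtain ⟨χ, hχme, hφχ, hχint⟩ := exists_measurable_envelope (μ.restrict Ω) Ω hΩm φ hφ0
    have hcompare : ∫⁻ w, χ w ∂(μ.restrict Ω) ≤ ∫⁻ z, h z ∂ν := by
      refine le_trans hχint ?_
      rw [lintegral_eq_layercake ν h hhme]
      refine lintegral_mono_ae ?_
      filter_upwards [ae_restrict_mem measurableSet_Ioi] with t ht
      have hA : MeasurableSet {z : Z | ENNReal.ofReal t < h z} :=
        measurableSet_lt measurable_const hhme
      rw [hν _ hA]
      have hseteq : Subtype.val '' (ι ⁻¹' {z : Z | ENNReal.ofReal t < h z})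
          = {x : X | ENNReal.ofReal t < φ x} := by
        ext x
        constructor
        · rintro ⟨ω, hω, rfl⟩
          rw [Set.mem_preimage, Set.mem_setOf_eq] at hω
          rw [Set.mem_setOf_eq, hφdef]
          simp only
          rw [dif_pos ω.2]
          simpa using hω
        · intro hx
          rw [Set.mem_setOf_eq] at hx
          have hxΩ : x ∈ Ω := by
            by_contra hc
            rw [hφ0 x hc] at hx
            simp at hx
          refine ⟨⟨x, hxΩ⟩, ?_, rfl⟩
          rw [Set.mem_preimage, Set.mem_setOf_eq]
          rw [hφdef] at hx
          simp only at hx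
          rwa [dif_pos hxΩ] at hx
      rw [hseteq]
      exact Measure.restrict_apply_le Ω _
    have hkey : ∀ a : ℝ≥0∞, (a ^ p) ^ (1/p) = a := fun a => by
      rw [← ENNReal.rpow_mul, mul_one_div_cancel hpne, ENNReal.rpow_one]
    have hkey2 : ∀ a : ℝ≥0∞, (a ^ (1/p)) ^ p = a := fun a => by
      rw [← ENNReal.rpow_mul, one_div_mul_cancel hpne, ENNReal.rpow_one]
    set ψ : X → ℝ≥0∞ := fun x => χ x ^ (1/p) with hψdef
    have hψme : Measurable ψ := hχme.pow_const _
    have hψUG : IsUpperGradientWith (fun x y => edist x y) Ω ψ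
        (fun y => (f y : EReal)) := by
      intro γ L hL hmapγ hal
      set γb : ℝ → X := fun t => γ (clampI 0 L t) with hγb
      set γZ : ℝ → Z := fun t => if hx : γb t ∈ Ω then ι ⟨γb t, hx⟩ else z₀ with hγZ
      have hγZval : ∀ t (ht : t ∈ Set.Icc 0 L), γZ t = ι ⟨γ t, hmapγ ht⟩ := by
        intro t ht
        have h1 : γb t = γ t := by
          rw [hγb]; simp only; rw [clampI_of_mem ht]
        have h2 : γ t ∈ Ω := hmapγ ht
        rw [hγZ]
        simp only
        rw [dif_pos (h1 ▸ h2)]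
        congr 1
        exact Subtype.ext h1
      have harc := iota_comp_arc hι hΦ hΦι z₀ hL hal hmapγ
      have happ := hg'UG γZ L hL (Set.mapsTo_univ _ _) harc
      rw [hγZval L ⟨hL.le, le_refl L⟩, hγZval 0 ⟨le_refl 0, hL.le⟩] at happ
      simp only [Function.comp_apply, hΦι] at happ
      refine le_trans happ ?_
      refine lintegral_mono_ae ?_
      filter_upwards [ae_restrict_mem measurableSet_Icc] with t ht
      rw [hγZval t ht]
      have e1 : φ (γ t) = h (ι ⟨γ t, hmapγ ht⟩) := by
        rw [hφdef]; simp only; rw [dif_pos (hmapγ ht)]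
      calc g' (ι ⟨γ t, hmapγ ht⟩) = (h (ι ⟨γ t, hmapγ ht⟩)) ^ (1/p) := by
            rw [hh]; simp only; rw [hkey]
        _ = (φ (γ t)) ^ (1/p) := by rw [e1]
        _ ≤ (χ (γ t)) ^ (1/p) := ENNReal.rpow_le_rpow (hφχ (γ t)) (by positivity)
        _ = ψ (γ t) := rfl
    calc (⨅ g ∈ {g : X → ℝ≥0∞ | Measurable g ∧ IsUpperGradientWith
          (fun x y => edist x y) Ω g (fun y => (f y : EReal))}, ∫⁻ y in Ω, g y ^ p ∂μ)
        ≤ ∫⁻ y in Ω, ψ y ^ p ∂μ := iInf₂_le ψ ⟨hψme, hψUG⟩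
      _ = ∫⁻ y in Ω, χ y ∂μ := by
          refine lintegral_congr fun y => ?_
          rw [hψdef]; simp only; rw [hkey2]
      _ = ∫⁻ w, χ w ∂(μ.restrict Ω) := rfl
      _ ≤ ∫⁻ z, h z ∂ν := hcompare
      _ = ∫⁻ z in Set.univ, g' z ^ p ∂ν := by rw [Measure.restrict_univ]
  -- combine
  have hinfeq1 : (⨅ g ∈ {g : X → ℝ≥0∞ | Measurable g ∧ IsUpperGradientWith
        (fun x y => edist x y) Ω g (fun y => (f y : EReal))}, ∫⁻ y in Ω, g y ^ p ∂μ)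
      = ⨅ g ∈ {g : X → ℝ≥0∞ | Measurable g ∧ IsUpperGradientWith
        (fun x y => edist x y) (closure Ω) g (fun y => (f y : EReal))},
        ∫⁻ y in closure Ω, g y ^ p ∂(μ.restrict Ω) := le_antisymm h1 h4
  have hinfeq2 : (⨅ g ∈ {g : Z → ℝ≥0∞ | Measurable g ∧ IsUpperGradientWith
        (fun x y => edist x y) (Set.univ : Set Z) g (fun z => ((f ∘ Φ) z : EReal))},
        ∫⁻ z in Set.univ, g z ^ p ∂ν)
      = ⨅ g ∈ {g : X → ℝ≥0∞ | Measurable g ∧ IsUpperGradientWith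
        (fun x y => edist x y) Ω g (fun y => (f y : EReal))}, ∫⁻ y in Ω, g y ^ p ∂μ :=
    le_antisymm (h3.trans h4) h2
  have hE2 : npEnergyOn μ p Ω f = npEnergyOn (μ.restrict Ω) p (closure Ω) f := by
    simp only [npEnergyOn, npEnergyWith]
    rw [restrict_closure_eq μ hΩm (fun y => ENNReal.ofReal |f y| ^ p), hinfeq1]
  have hE1 : npEnergyOn ν p (Set.univ : Set Z) (f ∘ Φ) = npEnergyOn μ p Ω f := by
    simp only [npEnergyOn, npEnergyWith]
    rw [eqIpart, hinfeq2]
  refine ⟨⟨hfm.comp hΦmeas, ?_⟩, hE1, hE2⟩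
  rw [hE1, hE2]
  exact hf.2

end
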